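/- Let η be an ℕ-valued random variable with finite mean k* = E[η], and suppose that for every integer k ≥ 1, k·P(η = k) ≤ Λ·P(η = k-1) for some constant Λ > 0. Then P(η ≥ ⌊k*⌋) ≥ 1/(1 + Λ). -/
import Mathlib

private lemma ind_summable {f : ℕ → ℝ} (h : Summable f) (K : ℕ) :
    Summable (fun j => if K ≤ j then f j else 0) := by
  refine (h.indicator {j | K ≤ j}).congr (fun j => ?_)
  by_cases hj : K ≤ j <;> simp [Set.indicator_apply, Set.mem_setOf_eq, hj]

/-- Let `η` be an ℕ-valued random variable with distribution `p`, finite mean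
`k* = ∑ j·p j`, and suppose `k·P(η = k) ≤ Λ·P(η = k-1)` for every `k ≥ 1`.
Then `P(η ≥ ⌊k*⌋) ≥ 1/(1 + Λ)`. -/
theorem prob_ge_floor_mean (p : ℕ → ℝ) (hp : ∀ j, 0 ≤ p j)
    (hsum : ∑' j : ℕ, p j = 1) (hmean : Summable (fun j : ℕ => (j : ℝ) * p j))
    (Λ : ℝ) (hΛ : 0 < Λ)
    (hratio : ∀ k : ℕ, 1 ≤ k → (k : ℝ) * p k ≤ Λ * p (k - 1)) :
    1 / (1 + Λ) ≤
      ∑' j : ℕ, if Nat.floor (∑' j : ℕ, (j : ℝ) * p j) ≤ j then p j else 0 := by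
  set m := ∑' j : ℕ, (j : ℝ) * p j with hm
  set K := Nat.floor m with hKdef
  have hpsum : Summable p := by
    by_contra h
    rw [tsum_eq_zero_of_not_summable h] at hsum
    norm_num at hsum
  have hmnn : 0 ≤ m := tsum_nonneg (fun j => mul_nonneg (by positivity) (hp j))
  have hKm : (K : ℝ) ≤ m := Nat.floor_le hmnn
  set f : ℕ → ℝ := fun j => ((j : ℝ) - K + 1) * p j with hf
  have hfsum : Summable f := by
    have : f = fun j : ℕ => (j : ℝ) * p j + (1 - (K : ℝ)) * p j := by
      funext j; simp only [hf]; ring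
    rw [this]
    exact hmean.add (hpsum.mul_left _)
  have hftsum : ∑' j, f j = m - K + 1 := by
    have he : ∀ j, f j = (j : ℝ) * p j + (1 - (K : ℝ)) * p j := by
      intro j; simp only [hf]; ring
    calc ∑' j, f j = ∑' j : ℕ, ((j : ℝ) * p j + (1 - (K : ℝ)) * p j) := tsum_congr he
      _ = m + (1 - (K : ℝ)) * ∑' j, p j := by
          rw [Summable.tsum_add hmean (hpsum.mul_left _), tsum_mul_left, hm]
      _ = m - K + 1 := by rw [hsum]; ring
  have hfind : Summable (fun j => if K ≤ j then f j else 0) := ind_summable hfsum K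
  have hindp : Summable (fun j => if K ≤ j then p j else 0) := ind_summable hpsum K
  set g : ℕ → ℝ := fun j => if K ≤ j then ((j : ℝ) - K) * p j else 0 with hg
  have hgsum : Summable g := by
    have h1 : Summable (fun j : ℕ => ((j : ℝ) - K) * p j) := by
      have : (fun j : ℕ => ((j : ℝ) - K) * p j) = fun j : ℕ => (j : ℝ) * p j + (-(K : ℝ)) * p j := by
        funext j; ring
      rw [this]
      exact hmean.add (hpsum.mul_left _)
    exact ind_summable h1 K
  -- step 1 : ∑ f ≤ ∑ indicator f
  have step1 : ∑' j, f j ≤ ∑' j, (if K ≤ j then f j else 0) := by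
    refine Summable.tsum_le_tsum (fun j => ?_) hfsum hfind
    by_cases hj : K ≤ j
    · simp [hj]
    · simp only [hj, if_false]
      push_neg at hj
      have hj1 : (j : ℝ) + 1 ≤ K := by exact_mod_cast Nat.succ_le_of_lt hj
      have hnp : (j : ℝ) - K + 1 ≤ 0 := by linarith
      simp only [hf]
      nlinarith [hp j]
  -- step 2 : split indicator f sum
  have step2 : ∑' j, (if K ≤ j then f j else 0)
      = (∑' j, (if K ≤ j then p j else 0)) + ∑' j, g j := by
    rw [← Summable.tsum_add hindp hgsum]
    refine tsum_congr (fun j => ?_)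
    by_cases hj : K ≤ j
    · simp only [hg, hf, hj, if_true]; ring
    · simp [hg, hf, hj]
  -- step 3 : shift index of g
  have hg0 : g 0 = 0 := by
    by_cases h0 : K ≤ 0
    · interval_cases K <;> simp [hg]
    · simp [hg, h0]
  have step3 : ∑' j, g j = ∑' n, g (n + 1) := by
    rw [Summable.tsum_eq_zero_add hgsum, hg0, zero_add]
  -- step 4 : termwise bound on shifted g
  have step4 : ∑' n, g (n + 1) ≤ ∑' n, Λ * (if K ≤ n then p n else 0) := by
    refine Summable.tsum_le_tsum (fun n => ?_) ((summable_nat_add_iff 1).2 hgsum) (hindp.mul_left Λ)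
    have hr := hratio (n + 1) (Nat.le_add_left 1 n)
    simp only [Nat.add_sub_cancel] at hr
    by_cases hn : K ≤ n
    · have hn1 : K ≤ n + 1 := le_trans hn (Nat.le_succ n)
      simp only [hg, hn1, if_true, hn, if_true]
      have hK0 : (0 : ℝ) ≤ K := by positivity
      have hc : ((n + 1 : ℕ) : ℝ) = (n : ℝ) + 1 := by push_cast; ring
      rw [hc] at hr
      nlinarith [hp (n + 1)]
    · simp only [hn, if_false, mul_zero]
      by_cases hn1 : K ≤ n + 1
      · have hKe : K = n + 1 := le_antisymm hn1 (Nat.not_le.1 hn)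
        simp [hg, hKe]
      · simp [hg, hn1]
  have step5 : ∑' n, Λ * (if K ≤ n then p n else 0)
      = Λ * ∑' j, (if K ≤ j then p j else 0) := tsum_mul_left
  set A := ∑' j, (if K ≤ j then p j else 0) with hA
  have hfinal : 1 ≤ (1 + Λ) * A := by
    have h1 : (1 : ℝ) ≤ m - K + 1 := by linarith
    have : (1 : ℝ) ≤ A + Λ * A := by
      rw [hftsum] at step1
      rw [step2, step3] at step1
      linarith [step4, step5 ▸ le_refl (Λ * A)]
    linarith
  have hApos : 0 < 1 + Λ := by linarith
  rw [div_le_iff₀ hApos]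
  linarith
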